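/- Let N ∈ ℕ and let φ : ℚ[Y₁, …, Y_{2n}] → ℚ[X₁, …, Xₙ] be the ℚ-algebra homomorphism determined by φ(Y_i) = (N + 1/4) + X_i and φ(Y_{n+i}) = (N + 1/4) − X_i for i = 1, …, n. If G ∈ ℚ[Y₁, …, Y_{2n}] has only nonnegative coefficients, then φ(G) lies in the quadratic module in ℚ[X₁, …, Xₙ] generated by N − (X₁² + ⋯ + Xₙ²); that is, φ(G) = σ₀ + σ·(N − Σ_j X_j²) for some sums of squares σ₀, σ of polynomials with rational coefficients. -/

import Mathlib

open MvPolynomial Finset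

/-- `f` is a sum of squares in a commutative ring. -/
def IsSOS {R : Type*} [CommRing R] (f : R) : Prop :=
  ∃ (k : ℕ) (p : Fin k → R), f = ∑ i, p i ^ 2

section Lemmas

variable {R : Type*} [CommRing R]

lemma isSOS_of_isSumSq {f : R} (h : IsSumSq f) : IsSOS f := by
  induction h with
  | zero => exact ⟨0, Fin.elim0, by simp⟩
  | sq_add a pS ih =>
    obtain ⟨k, p, hp⟩ := ih
    exact ⟨k + 1, Fin.cons a p, by simp [Fin.sum_univ_succ, hp, sq]⟩

lemma isSumSq_of_isSOS {f : R} (h : IsSOS f) : IsSumSq f := by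
  obtain ⟨k, p, hp⟩ := h
  subst hp
  induction k with
  | zero => simpa using IsSumSq.zero
  | succ m ih =>
    rw [Fin.sum_univ_succ, sq]
    exact IsSumSq.sq_add _ (ih _)

lemma IsSOS.zero : IsSOS (0 : R) := ⟨0, Fin.elim0, by simp⟩

lemma IsSOS.sq (a : R) : IsSOS (a ^ 2) := ⟨1, fun _ => a, by simp⟩

lemma IsSOS.add {a b : R} (ha : IsSOS a) (hb : IsSOS b) : IsSOS (a + b) :=
  isSOS_of_isSumSq ((isSumSq_of_isSOS ha).add (isSumSq_of_isSOS hb))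

lemma IsSOS.mul {a b : R} (ha : IsSOS a) (hb : IsSOS b) : IsSOS (a * b) := by
  obtain ⟨k, p, hp⟩ := ha
  induction k generalizing a with
  | zero => simp [hp]; exact IsSOS.zero
  | succ m ih =>
    rw [hp, Fin.sum_univ_succ, add_mul]
    refine IsSOS.add ?_ (ih _ rfl)
    obtain ⟨l, q, hq⟩ := hb
    rw [hq, Finset.mul_sum]
    refine isSOS_of_isSumSq ?_
    have : ∀ j : Fin l, p 0 ^ 2 * q j ^ 2 = (p 0 * q j) * (p 0 * q j) := by
      intro j; ring
    simp_rw [this]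
    exact IsSumSq.sum_mul_self _ _

lemma IsSOS.sum {ι : Type*} (s : Finset ι) (f : ι → R) (h : ∀ i ∈ s, IsSOS (f i)) :
    IsSOS (∑ i ∈ s, f i) :=
  Finset.sum_induction f IsSOS (fun _ _ ha hb => ha.add hb) IsSOS.zero h

end Lemmas

/-- Nonnegative rational constants are sums of squares. -/
lemma isSOS_C_of_nonneg {n : ℕ} {c : ℚ} (hc : 0 ≤ c) :
    IsSOS (C c : MvPolynomial (Fin n) ℚ) := by
  obtain ⟨a, b, d, e, h⟩ := Nat.sum_four_squares (c.num.toNat * c.den)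
  have hden : (c.den : ℚ) ≠ 0 := by exact_mod_cast c.den_ne_zero
  have hnum : (c.num.toNat : ℚ) = (c.num : ℚ) := by
    exact_mod_cast Int.toNat_of_nonneg (Rat.num_nonneg.mpr hc)
  have h' : ((a : ℚ)^2 + b^2 + d^2 + e^2) = (c.num : ℚ) * c.den := by
    have h2 := congrArg (fun m : ℕ => (m : ℚ)) h
    push_cast at h2
    rw [h2, hnum]
  have key : c = ((a:ℚ)/c.den)^2 + ((b:ℚ)/c.den)^2 + ((d:ℚ)/c.den)^2 + ((e:ℚ)/c.den)^2 := by
    refine Eq.symm ?_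
    simp only [div_pow, ← add_div]
    rw [h', sq, mul_div_mul_right _ _ hden, Rat.num_div_den]
  refine ⟨4, ![C ((a : ℚ) / c.den), C ((b : ℚ) / c.den), C ((d : ℚ) / c.den),
    C ((e : ℚ) / c.den)], ?_⟩
  conv_lhs => rw [key]
  simp [Fin.sum_univ_four, map_add, map_pow]

section QM

variable {R : Type*} [CommRing R]

/-- Membership in the quadratic module generated by `g`. -/
def InQM (g f : R) : Prop := ∃ σ₀ σ : R, IsSOS σ₀ ∧ IsSOS σ ∧ f = σ₀ + σ * g

lemma InQM.of_isSOS {g f : R} (h : IsSOS f) : InQM g f :=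
  ⟨f, 0, h, IsSOS.zero, by ring⟩

lemma InQM.one {g : R} : InQM g 1 := InQM.of_isSOS (by simpa using IsSOS.sq (1 : R))

lemma InQM.zero {g : R} : InQM g 0 := InQM.of_isSOS IsSOS.zero

lemma InQM.add {g a b : R} (ha : InQM g a) (hb : InQM g b) : InQM g (a + b) := by
  obtain ⟨s0, s1, hs0, hs1, rfl⟩ := ha
  obtain ⟨t0, t1, ht0, ht1, rfl⟩ := hb
  exact ⟨s0 + t0, s1 + t1, hs0.add ht0, hs1.add ht1, by ring⟩

lemma InQM.mul {g a b : R} (ha : InQM g a) (hb : InQM g b) : InQM g (a * b) := by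
  obtain ⟨s0, s1, hs0, hs1, rfl⟩ := ha
  obtain ⟨t0, t1, ht0, ht1, rfl⟩ := hb
  refine ⟨s0 * t0 + (s1 * t1) * g ^ 2, s0 * t1 + s1 * t0,
    (hs0.mul ht0).add ((hs1.mul ht1).mul (IsSOS.sq g)),
    (hs0.mul ht1).add (hs1.mul ht0), by ring⟩

lemma InQM.pow {g a : R} (ha : InQM g a) (k : ℕ) : InQM g (a ^ k) := by
  induction k with
  | zero => simpa using InQM.one
  | succ m ih => rw [pow_succ]; exact ih.mul ha

lemma InQM.sum {ι : Type*} {g : R} (s : Finset ι) (f : ι → R)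
    (h : ∀ i ∈ s, InQM g (f i)) : InQM g (∑ i ∈ s, f i) :=
  Finset.sum_induction f (InQM g) (fun _ _ ha hb => ha.add hb) InQM.zero h

lemma InQM.prod {ι : Type*} {g : R} (s : Finset ι) (f : ι → R)
    (h : ∀ i ∈ s, InQM g (f i)) : InQM g (∏ i ∈ s, f i) :=
  Finset.prod_induction f (InQM g) (fun _ _ ha hb => ha.mul hb) InQM.one h

end QM

/-- The generators land in the quadratic module. -/
lemma inQM_affine {n N : ℕ} (i : Fin n) (ε : ℚ) (hε : ε = 1 ∨ ε = -1) :
    InQM ((N : MvPolynomial (Fin n) ℚ) - ∑ j, X j ^ 2)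
      (C ((N : ℚ) + 1/4) + C ε * X i) := by
  refine ⟨(C (ε/2) + X i) ^ 2 + ∑ j ∈ univ.erase i, X j ^ 2, 1,
    (IsSOS.sq _).add (IsSOS.sum _ _ fun j _ => IsSOS.sq _), ⟨1, fun _ => 1, by simp⟩, ?_⟩
  have hsum : ∑ j ∈ univ.erase i, (X j : MvPolynomial (Fin n) ℚ) ^ 2
      = (∑ j, X j ^ 2) - X i ^ 2 := by
    rw [eq_sub_iff_add_eq, Finset.sum_erase_add _ _ (mem_univ i)]
  rw [hsum]
  have hε2 : ε ^ 2 = 1 := by rcases hε with h | h <;> simp [h]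
  have hC : (C (ε/2) : MvPolynomial (Fin n) ℚ) ^ 2 = C (1/4) := by
    rw [← map_pow]; congr 1; rw [div_pow, hε2]; norm_num
  have h2 : (C (ε/2) * 2 : MvPolynomial (Fin n) ℚ) = C ε := by
    rw [← map_ofNat (C : ℚ →+* MvPolynomial (Fin n) ℚ) 2, ← map_mul]
    norm_num
  have expand : (C (ε/2) + X i : MvPolynomial (Fin n) ℚ) ^ 2
      = C (1/4) + C ε * X i + X i ^ 2 := by
    have : (C (ε/2) + X i : MvPolynomial (Fin n) ℚ) ^ 2
        = C (ε/2) ^ 2 + (C (ε/2) * 2) * X i + X i ^ 2 := by ring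
    rw [this, hC, h2]
  have hN : (C ((N : ℚ)) : MvPolynomial (Fin n) ℚ) = (N : MvPolynomial (Fin n) ℚ) :=
    map_natCast (C : ℚ →+* MvPolynomial (Fin n) ℚ) N
  rw [expand, map_add, hN]
  ring

/-- Let `φ : ℚ[Y₁, …, Y_{2n}] → ℚ[X₁, …, Xₙ]` be the `ℚ`-algebra homomorphism with
`φ(Yᵢ) = (N + 1/4) + Xᵢ` and `φ(Y_{n+i}) = (N + 1/4) - Xᵢ` (the first `n` variables
are indexed by `Sum.inl` and the last `n` by `Sum.inr`).  If
`G ∈ ℚ[Y₁, …, Y_{2n}]` has only nonnegative coefficients, then `φ(G)` lies in the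
quadratic module generated in `ℚ[X₁, …, Xₙ]` by `N - (X₁² + ⋯ + Xₙ²)`:
`φ(G) = σ₀ + σ (N - Σⱼ Xⱼ²)` with `σ₀, σ` sums of squares of polynomials with
rational coefficients. -/
theorem image_of_nonneg_coeffs_in_quadratic_module (n N : ℕ)
    (φ : MvPolynomial (Fin n ⊕ Fin n) ℚ →ₐ[ℚ] MvPolynomial (Fin n) ℚ)
    (hφ : ∀ i : Fin n,
      φ (X (Sum.inl i)) = C ((N : ℚ) + 1/4) + X i ∧
      φ (X (Sum.inr i)) = C ((N : ℚ) + 1/4) - X i)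
    (G : MvPolynomial (Fin n ⊕ Fin n) ℚ)
    (hG : ∀ μ : Fin n ⊕ Fin n →₀ ℕ, 0 ≤ G.coeff μ) :
    ∃ σ₀ σ : MvPolynomial (Fin n) ℚ, IsSOS σ₀ ∧ IsSOS σ ∧
      φ G = σ₀ + σ * ((N : MvPolynomial (Fin n) ℚ) - ∑ j, X j ^ 2) := by
  suffices h : InQM ((N : MvPolynomial (Fin n) ℚ) - ∑ j, X j ^ 2) (φ G) by
    obtain ⟨σ₀, σ, h0, h1, he⟩ := h
    exact ⟨σ₀, σ, h0, h1, he⟩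
  rw [show φ G = φ (∑ v ∈ G.support, monomial v (G.coeff v)) from by rw [← G.as_sum], map_sum]
  refine InQM.sum _ _ fun v hv => ?_
  rw [monomial_eq, map_mul]
  refine InQM.mul ?_ ?_
  · have hCa : φ (C (G.coeff v)) = C (G.coeff v) := by
      rw [← MvPolynomial.algebraMap_eq]
      exact φ.commutes _
    rw [hCa]
    exact InQM.of_isSOS (isSOS_C_of_nonneg (hG v))
  · rw [Finsupp.prod, map_prod]
    refine InQM.prod _ _ fun j hj => ?_
    rw [map_pow]
    refine InQM.pow ?_ _
    cases j with
    | inl i =>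
      rw [(hφ i).1]
      simpa using inQM_affine (N := N) i 1 (Or.inl rfl)
    | inr i =>
      rw [(hφ i).2]
      simpa [sub_eq_add_neg, map_neg, neg_mul] using inQM_affine (N := N) i (-1) (Or.inr rfl)
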